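/- Let δ be a derivation on a ring R, M an R-bimodule, d a δ-derivation on M, and ₗF_r a symmetric Gabriel filter induced by a left Gabriel filter F_l and a right Gabriel filter F_r. If M is torsion-free for the induced symmetric torsion theory (ₗt_r(M) = 0), then d extends to a derivation on the symmetric module of quotients ₗM_r such that d q_M = q_M d. -/

import Mathlib

open MulOpposite TensorProduct

/-- A derivation on a ring `S`: an additive map satisfying the Leibniz rule
`δ (a * b) = δ a * b + a * δ b`. -/
def IsDerivation {S : Type*} [Ring S] (δ : S → S) : Prop :=
  (∀ a b : S, δ (a + b) = δ a + δ b) ∧ (∀ a b : S, δ (a * b) = δ a * b + a * δ b)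

/-- A Gabriel filter of left ideals of a ring `S`.  Taking `S = Rᵐᵒᵖ`, this encodes a
Gabriel filter of right ideals of `R`. -/
structure GabrielFilter (S : Type*) [Ring S] where
  sets : Set (Ideal S)
  top_mem : ⊤ ∈ sets
  mono : ∀ ⦃I J : Ideal S⦄, I ∈ sets → I ≤ J → J ∈ sets
  inf_mem : ∀ ⦃I J : Ideal S⦄, I ∈ sets → J ∈ sets → I ⊓ J ∈ sets
  quot_mem : ∀ ⦃I : Ideal S⦄, I ∈ sets → ∀ s : S,
    Submodule.comap (LinearMap.toSpanSingleton S S s) I ∈ sets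
  trans : ∀ ⦃I J : Ideal S⦄, J ∈ sets →
    (∀ s ∈ J, Submodule.comap (LinearMap.toSpanSingleton S S s) I ∈ sets) → I ∈ sets

/-- The torsion set of a module for the torsion theory corresponding to a filter `𝔉` of
ideals: the elements whose annihilator belongs to `𝔉`. -/
def torsionSet {S : Type*} [Ring S] (𝔉 : Set (Ideal S)) (M : Type*) [AddCommGroup M]
    [Module S M] : Set M :=
  {x : M | LinearMap.ker (LinearMap.toSpanSingleton S M x) ∈ 𝔉}

/-- The enveloping ring `R ⊗_ℤ Rᵐᵒᵖ`; an `R`-bimodule is the same thing as a right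
`R ⊗_ℤ Rᵐᵒᵖ`-module, i.e. a left `(R ⊗_ℤ Rᵐᵒᵖ)ᵐᵒᵖ`-module, via `x • (r ⊗ s) = s x r`. -/
abbrev Env (R : Type*) [Ring R] := R ⊗[ℤ] Rᵐᵒᵖ

/-- The left annihilator of an element of an `R`-bimodule, a left ideal of `R`:
`ann_l(x) = {s : R | s • x = 0}`, where the left action of `s` is the action of
`1 ⊗ op s`. -/
def lAnn {R : Type*} [Ring R] (M : Type*) [AddCommGroup M] [Module (Env R)ᵐᵒᵖ M]
    (x : M) : Ideal R where
  carrier := {s : R | op ((1 : R) ⊗ₜ[ℤ] op s) • x = 0}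
  zero_mem' := by simp <;> first | exact zero_smul (Env R)ᵐᵒᵖ x | exact (zero_smul (Env R)ᵐᵒᵖ x :)
  add_mem' := by
    intro a b ha hb
    simp only [Set.mem_setOf_eq] at *
    rw [show ((1 : R) ⊗ₜ[ℤ] op (a + b)) = (1 : R) ⊗ₜ[ℤ] op a + (1 : R) ⊗ₜ[ℤ] op b by
        rw [op_add, TensorProduct.tmul_add],
      op_add, add_smul, ha, hb, add_zero]
  smul_mem' := by
    intro c s hs
    simp only [Set.mem_setOf_eq, smul_eq_mul] at *
    rw [show ((1 : R) ⊗ₜ[ℤ] op (c * s)) = ((1 : R) ⊗ₜ[ℤ] op s) * ((1 : R) ⊗ₜ[ℤ] op c) by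
        rw [Algebra.TensorProduct.tmul_mul_tmul, one_mul, ← op_mul],
      op_mul, mul_smul, hs, smul_zero]

/-- The right annihilator of an element of an `R`-bimodule, a right ideal of `R`
(encoded as a left ideal of `Rᵐᵒᵖ`): `ann_r(x) = {r | x • r = 0}`, where the right
action of `r` is the action of `r ⊗ 1`. -/
def rAnn {R : Type*} [Ring R] (M : Type*) [AddCommGroup M] [Module (Env R)ᵐᵒᵖ M]
    (x : M) : Ideal Rᵐᵒᵖ where
  carrier := {j : Rᵐᵒᵖ | op (unop j ⊗ₜ[ℤ] (1 : Rᵐᵒᵖ)) • x = 0}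
  zero_mem' := by simp <;> first | exact zero_smul (Env R)ᵐᵒᵖ x | exact (zero_smul (Env R)ᵐᵒᵖ x :)
  add_mem' := by
    intro a b ha hb
    simp only [Set.mem_setOf_eq] at *
    rw [show (unop (a + b) ⊗ₜ[ℤ] (1 : Rᵐᵒᵖ)) =
          unop a ⊗ₜ[ℤ] (1 : Rᵐᵒᵖ) + unop b ⊗ₜ[ℤ] (1 : Rᵐᵒᵖ) by
        rw [unop_add, TensorProduct.add_tmul],
      op_add, add_smul, ha, hb, add_zero]
  smul_mem' := by
    intro c j hj
    simp only [Set.mem_setOf_eq, smul_eq_mul] at *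
    rw [show (unop (c * j) ⊗ₜ[ℤ] (1 : Rᵐᵒᵖ)) =
          (unop j ⊗ₜ[ℤ] (1 : Rᵐᵒᵖ)) * (unop c ⊗ₜ[ℤ] (1 : Rᵐᵒᵖ)) by
        rw [Algebra.TensorProduct.tmul_mul_tmul, one_mul, unop_mul],
      op_mul, mul_smul, hj, smul_zero]

/-- The symmetric annihilator of an element of a bimodule: the right ideal
`{t ∈ R ⊗_ℤ Rᵐᵒᵖ | x t = 0}`. -/
def symAnn {R : Type*} [Ring R] (M : Type*) [AddCommGroup M] [Module (Env R)ᵐᵒᵖ M]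
    (x : M) : Ideal (Env R)ᵐᵒᵖ :=
  LinearMap.ker (LinearMap.toSpanSingleton (Env R)ᵐᵒᵖ M x)

/-- The right ideal `J ⊗ Rᵐᵒᵖ + R ⊗ I` of `R ⊗_ℤ Rᵐᵒᵖ` generated by a left ideal `I`
and a right ideal `J` of `R`. -/
def symGen {R : Type*} [Ring R] (I : Ideal R) (J : Ideal Rᵐᵒᵖ) : Ideal (Env R)ᵐᵒᵖ :=
  Ideal.span ((fun j : Rᵐᵒᵖ => op (unop j ⊗ₜ[ℤ] (1 : Rᵐᵒᵖ))) '' (J : Set Rᵐᵒᵖ) ∪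
    (fun i : R => op ((1 : R) ⊗ₜ[ℤ] op i)) '' (I : Set R))

/-- The symmetric Gabriel filter induced by a left Gabriel filter `Fl` and a right
Gabriel filter `Fr`: the right ideals of `R ⊗_ℤ Rᵐᵒᵖ` containing `J ⊗ Rᵐᵒᵖ + R ⊗ I` for
some `I ∈ Fl` and `J ∈ Fr`. -/
def symSets {R : Type*} [Ring R] (Fl : GabrielFilter R) (Fr : GabrielFilter Rᵐᵒᵖ) :
    Set (Ideal (Env R)ᵐᵒᵖ) :=
  {K | ∃ I ∈ Fl.sets, ∃ J ∈ Fr.sets, symGen I J ≤ K}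

/-- The torsion submodule of a bimodule for the symmetric torsion theory induced by `Fl`
and `Fr`: `ₗt_r(M) = t_l(M) ∩ t_r(M)`. -/
def symTorsion {R : Type*} [Ring R] (Fl : GabrielFilter R) (Fr : GabrielFilter Rᵐᵒᵖ)
    (M : Type*) [AddCommGroup M] [Module (Env R)ᵐᵒᵖ M] : Set M :=
  {x : M | lAnn M x ∈ Fl.sets} ∩ {x : M | rAnn M x ∈ Fr.sets}

/-- `δ'` is the derivation induced on `R ⊗_ℤ Rᵐᵒᵖ` by the derivation `δ` on `R`:
`δ̄(r ⊗ s) = δ r ⊗ s + r ⊗ δ s`. -/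
def IsInducedDerivation {R : Type*} [Ring R] (δ : R → R) (δ' : Env R → Env R) : Prop :=
  (∀ a b : Env R, δ' (a + b) = δ' a + δ' b) ∧
    ∀ r s : R, δ' (r ⊗ₜ[ℤ] op s) = δ r ⊗ₜ[ℤ] op s + r ⊗ₜ[ℤ] op (δ s)

/-- `d` is a `δ`-derivation on the `R`-bimodule `M`: `d` is additive,
`d (x r) = (d x) r + x (δ r)` and `d (s x) = (δ s) x + s (d x)`. -/
def IsBimodDerivation {R : Type*} [Ring R] (δ : R → R) {M : Type*} [AddCommGroup M]
    [Module (Env R)ᵐᵒᵖ M] (d : M → M) : Prop :=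
  (∀ x y : M, d (x + y) = d x + d y) ∧
  (∀ (x : M) (r : R),
    d (op (r ⊗ₜ[ℤ] (1 : Rᵐᵒᵖ)) • x) =
      op (r ⊗ₜ[ℤ] (1 : Rᵐᵒᵖ)) • d x + op (δ r ⊗ₜ[ℤ] (1 : Rᵐᵒᵖ)) • x) ∧
  (∀ (x : M) (s : R),
    d (op ((1 : R) ⊗ₜ[ℤ] op s) • x) =
      op ((1 : R) ⊗ₜ[ℤ] op (δ s)) • x + op ((1 : R) ⊗ₜ[ℤ] op s) • d x)

/-- The symmetric filter induced by `Fl` and `Fr` is differential: for every `I` in the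
filter there is `K` in the filter with `δ̄(K) ⊆ I` for all derivations `δ` on `R`. -/
def IsSymDifferential {R : Type*} [Ring R] (Fl : GabrielFilter R)
    (Fr : GabrielFilter Rᵐᵒᵖ) : Prop :=
  ∀ I ∈ symSets Fl Fr, ∃ K ∈ symSets Fl Fr, ∀ δ : R → R, IsDerivation δ →
    ∀ δ' : Env R → Env R, IsInducedDerivation δ δ' →
      ∀ t : (Env R)ᵐᵒᵖ, t ∈ K → op (δ' (unop t)) ∈ I

/-- `q : M → Q` realizes `Q` as the symmetric module of quotients of the bimodule `M`
with respect to the symmetric filter induced by `Fl` and `Fr`: the kernel of `q` is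
`ₗt_r(M)`, `Q` is torsion free, the cokernel of `q` is torsion, and `Q` is closed. -/
structure IsSymModuleOfQuotients {R : Type*} [Ring R] (Fl : GabrielFilter R)
    (Fr : GabrielFilter Rᵐᵒᵖ) {M Q : Type*} [AddCommGroup M] [Module (Env R)ᵐᵒᵖ M]
    [AddCommGroup Q] [Module (Env R)ᵐᵒᵖ Q] (q : M →ₗ[(Env R)ᵐᵒᵖ] Q) : Prop where
  ker_eq : (LinearMap.ker q : Set M) = symTorsion Fl Fr M
  torsionFree : symTorsion Fl Fr Q = {0}
  coker_torsion : ∀ y : Q,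
    Submodule.comap (LinearMap.toSpanSingleton (Env R)ᵐᵒᵖ Q y) (LinearMap.range q) ∈
      symSets Fl Fr
  closed : ∀ K ∈ symSets Fl Fr, ∀ f : ↥K →ₗ[(Env R)ᵐᵒᵖ] Q,
    ∃ g : (Env R)ᵐᵒᵖ →ₗ[(Env R)ᵐᵒᵖ] Q, ∀ t : ↥K, g ↑t = f t

section AuxDer

variable {R : Type*} [Ring R]

/-- The induced derivation on `R ⊗[ℤ] Rᵐᵒᵖ` as a `ℤ`-linear map. -/
noncomputable def envDer (δ : R → R) (h : ∀ a b : R, δ (a + b) = δ a + δ b) :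
    Env R →ₗ[ℤ] Env R :=
  TensorProduct.map (AddMonoidHom.mk' δ h).toIntLinearMap LinearMap.id +
    TensorProduct.map LinearMap.id
      ((MulOpposite.opLinearEquiv ℤ).toLinearMap ∘ₗ (AddMonoidHom.mk' δ h).toIntLinearMap
        ∘ₗ (MulOpposite.opLinearEquiv ℤ).symm.toLinearMap)

lemma envDer_tmul (δ : R → R) (h : ∀ a b : R, δ (a + b) = δ a + δ b) (r : R) (s : Rᵐᵒᵖ) :
    envDer δ h (r ⊗ₜ[ℤ] s) = δ r ⊗ₜ[ℤ] s + r ⊗ₜ[ℤ] op (δ (unop s)) := by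
  rw [envDer]; erw [LinearMap.add_apply, TensorProduct.map_tmul, TensorProduct.map_tmul]; rfl

lemma isDer_zero {δ : R → R} (hδ : IsDerivation δ) : δ 1 = 0 := by
  have := hδ.2 1 1
  simp only [mul_one, one_mul] at this
  have h2 : δ 1 + 0 = δ 1 + δ 1 := by rw [add_zero]; exact this
  exact ((add_left_cancel h2)).symm

lemma envDer_mul {δ : R → R} (hδ : IsDerivation δ) (a b : Env R) :
    envDer δ hδ.1 (a * b) = envDer δ hδ.1 a * b + a * envDer δ hδ.1 b := by
  induction a using TensorProduct.induction_on with
  | zero => simp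
  | add a₁ a₂ h₁ h₂ =>
      simp only [add_mul, map_add, h₁, h₂]; abel
  | tmul r s =>
      induction b using TensorProduct.induction_on with
      | zero => simp
      | add b₁ b₂ h₁ h₂ => simp only [mul_add, map_add, h₁, h₂]; abel
      | tmul r' s' =>
          simp only [Algebra.TensorProduct.tmul_mul_tmul, envDer_tmul]
          rw [hδ.2 r r']
          have hs : δ (unop (s * s')) = δ (unop s') * unop s + unop s' * δ (unop s) := by
            rw [unop_mul, hδ.2]
          rw [hs]
          simp only [TensorProduct.add_tmul, TensorProduct.tmul_add, add_mul, mul_add,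
            Algebra.TensorProduct.tmul_mul_tmul, op_add, op_mul, op_unop]
          abel

end AuxDer
section AuxBimod

variable {R : Type*} [Ring R] {M : Type*} [AddCommGroup M] [Module (Env R)ᵐᵒᵖ M]

lemma env_smul_add (t : (Env R)ᵐᵒᵖ) (a b : M) : t • (a + b) = t • a + t • b :=
  smul_add (M := (Env R)ᵐᵒᵖ) t a b

lemma env_add_smul (t s : (Env R)ᵐᵒᵖ) (a : M) : (t + s) • a = t • a + s • a :=
  add_smul (R := (Env R)ᵐᵒᵖ) t s a

lemma env_smul_sub (t : (Env R)ᵐᵒᵖ) (a b : M) : t • (a - b) = t • a - t • b := by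
  have h := smul_add (M := (Env R)ᵐᵒᵖ) t a (-b)
  have hn : t • (-b) = -(t • b) := smul_neg (M := (Env R)ᵐᵒᵖ) t b
  rw [sub_eq_add_neg, h, hn, ← sub_eq_add_neg]

lemma bimod_d_zero {δ : R → R} {d : M → M} (hd : IsBimodDerivation δ d) : d 0 = 0 := by
  have := hd.1 0 0
  rw [add_zero] at this
  have h2 : d 0 + 0 = d 0 + d 0 := by rw [add_zero]; exact this
  exact ((add_left_cancel h2)).symm

/-- Generalized Leibniz rule for the bimodule derivation: for every element `u` of the
enveloping ring, `d (u • x) = u • d x + δ'(u) • x`. -/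
lemma bimod_d_smul {δ : R → R} (hδ : IsDerivation δ) {d : M → M}
    (hd : IsBimodDerivation δ d) (u : Env R) (x : M) :
    d (op u • x) = op u • d x + op (envDer δ hδ.1 u) • x := by
  induction u using TensorProduct.induction_on with
  | zero =>
      rw [map_zero]
      have h0 : ∀ z : M, op (0 : Env R) • z = 0 := fun z => zero_smul (Env R)ᵐᵒᵖ z
      rw [h0, bimod_d_zero hd, add_zero, h0]
  | add u₁ u₂ h₁ h₂ =>
      simp only [op_add, add_smul, hd.1, h₁, h₂, map_add]
      abel
  | tmul r s =>
      have hfac : op (r ⊗ₜ[ℤ] s) = op ((1:R) ⊗ₜ[ℤ] s) * op (r ⊗ₜ[ℤ] (1:Rᵐᵒᵖ)) := by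
        rw [← op_mul, Algebra.TensorProduct.tmul_mul_tmul, mul_one, one_mul]
      rw [hfac, mul_smul]
      rw [show ((1:R) ⊗ₜ[ℤ] s) = ((1:R) ⊗ₜ[ℤ] op (unop s)) by rw [op_unop]]
      rw [hd.2.2, hd.2.1, envDer_tmul]
      rw [env_smul_add]
      simp only [smul_add, ← mul_smul, ← op_mul, Algebra.TensorProduct.tmul_mul_tmul,
        one_mul, mul_one, op_unop, op_add, add_smul]
      abel

end AuxBimod

section AuxFilter

variable {R : Type*} [Ring R] (Fl : GabrielFilter R) (Fr : GabrielFilter Rᵐᵒᵖ)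

lemma mem_symGen_left {I : Ideal R} {J : Ideal Rᵐᵒᵖ} {j : Rᵐᵒᵖ} (hj : j ∈ J) :
    op (unop j ⊗ₜ[ℤ] (1 : Rᵐᵒᵖ)) ∈ symGen I J :=
  Ideal.subset_span (Or.inl ⟨j, hj, rfl⟩)

lemma mem_symGen_right {I : Ideal R} {J : Ideal Rᵐᵒᵖ} {i : R} (hi : i ∈ I) :
    op ((1 : R) ⊗ₜ[ℤ] op i) ∈ symGen I J :=
  Ideal.subset_span (Or.inr ⟨i, hi, rfl⟩)

lemma symGen_mono {I I' : Ideal R} {J J' : Ideal Rᵐᵒᵖ} (hI : I ≤ I') (hJ : J ≤ J') :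
    symGen I J ≤ symGen I' J' := by
  apply Ideal.span_mono
  apply Set.union_subset_union <;> intro x hx
  · obtain ⟨j, hj, rfl⟩ := hx; exact ⟨j, hJ hj, rfl⟩
  · obtain ⟨i, hi, rfl⟩ := hx; exact ⟨i, hI hi, rfl⟩

lemma symSets_mono {K K' : Ideal (Env R)ᵐᵒᵖ} (h : K ∈ symSets Fl Fr) (hle : K ≤ K') :
    K' ∈ symSets Fl Fr := by
  obtain ⟨I, hI, J, hJ, hK⟩ := h
  exact ⟨I, hI, J, hJ, hK.trans hle⟩

lemma symSets_inf {K K' : Ideal (Env R)ᵐᵒᵖ} (h : K ∈ symSets Fl Fr)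
    (h' : K' ∈ symSets Fl Fr) : K ⊓ K' ∈ symSets Fl Fr := by
  obtain ⟨I, hI, J, hJ, hK⟩ := h
  obtain ⟨I', hI', J', hJ', hK'⟩ := h'
  refine ⟨I ⊓ I', Fl.inf_mem hI hI', J ⊓ J', Fr.inf_mem hJ hJ', le_inf ?_ ?_⟩
  · exact (symGen_mono inf_le_left inf_le_left).trans hK
  · exact (symGen_mono inf_le_right inf_le_right).trans hK'

/-- If `z` is annihilated by some ideal of the symmetric filter and the module is
torsion free, then `z = 0`. -/
lemma eq_zero_of_ann {Q : Type*} [AddCommGroup Q] [Module (Env R)ᵐᵒᵖ Q]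
    (hTF : symTorsion Fl Fr Q = {0}) {z : Q} {K : Ideal (Env R)ᵐᵒᵖ}
    (hK : K ∈ symSets Fl Fr) (hz : ∀ t ∈ K, t • z = 0) : z = 0 := by
  obtain ⟨I, hI, J, hJ, hle⟩ := hK
  have hmem : z ∈ symTorsion Fl Fr Q := by
    constructor
    · apply Fl.mono hI
      intro i hi
      exact hz _ (hle (mem_symGen_right hi))
    · apply Fr.mono hJ
      intro j hj
      exact hz _ (hle (mem_symGen_left hj))
  rw [hTF] at hmem
  exact hmem

end AuxFilter
set_option maxHeartbeats 1000000 in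
/-- Let `δ` be a derivation on `R`, `M` an `R`-bimodule, `d` a
`δ`-derivation on `M` and `ₗF_r` the symmetric Gabriel filter induced by `Fl` and `Fr`.
If `M` is torsion free for the induced symmetric torsion theory (`ₗt_r(M) = 0`), then
`d` extends to a derivation `d'` on the symmetric module of quotients `ₗM_r` such that
`d' ∘ q_M = q_M ∘ d`. -/
theorem sym_extension_of_torsionFree {R : Type*} [Ring R]
    (δ : R → R) (hδ : IsDerivation δ)
    (Fl : GabrielFilter R) (Fr : GabrielFilter Rᵐᵒᵖ)
    {M Q : Type*} [AddCommGroup M] [Module (Env R)ᵐᵒᵖ M]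
    [AddCommGroup Q] [Module (Env R)ᵐᵒᵖ Q]
    (d : M → M) (hd : IsBimodDerivation δ d)
    (q : M →ₗ[(Env R)ᵐᵒᵖ] Q) (hq : IsSymModuleOfQuotients Fl Fr q)
    (hM : symTorsion Fl Fr M = {0}) :
    ∃ d' : Q → Q, IsBimodDerivation δ d' ∧ ∀ x : M, d' (q x) = q (d x) := by
  classical
  set δ₂ : Env R →ₗ[ℤ] Env R := envDer δ hδ.1 with hδ₂def
  -- `q` is injective
  have hker : ∀ x : M, q x = 0 → x = 0 := by
    intro x hx
    have hx' : x ∈ (LinearMap.ker q : Set M) := hx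
    rw [hq.ker_eq, hM] at hx'
    exact hx'
  have hq_inj : ∀ x y : M, q x = q y → x = y := by
    intro x y h
    have h0 : q (x - y) = 0 := by rw [map_sub, h, sub_self]
    exact sub_eq_zero.mp (hker _ h0)
  -- key existence of the value of the extended derivation at each point
  have key : ∀ y : Q, ∃ w : Q, ∃ K ∈ symSets Fl Fr,
      (∀ t ∈ K, ∃ x : M, q x = t • y) ∧
      (∀ t ∈ K, ∀ x : M, q x = t • y → t • w = q (d x) - op (δ₂ (unop t)) • y) := by
    intro y
    set K : Ideal (Env R)ᵐᵒᵖ :=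
      Submodule.comap (LinearMap.toSpanSingleton (Env R)ᵐᵒᵖ Q y) (LinearMap.range q)
      with hKdef
    have hK : K ∈ symSets Fl Fr := hq.coker_torsion y
    have hpre : ∀ t : K, ∃ x : M, q x = (t : (Env R)ᵐᵒᵖ) • y := by
      intro t
      obtain ⟨x, hx⟩ := t.2
      refine ⟨x, ?_⟩
      rw [hx, LinearMap.toSpanSingleton_apply]
    choose m hm using hpre
    have hm_add : ∀ t₁ t₂ : K, m (t₁ + t₂) = m t₁ + m t₂ := by
      intro t₁ t₂
      apply hq_inj
      rw [map_add, hm, hm, hm, Submodule.coe_add, env_add_smul]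
    have hm_smul : ∀ (s : (Env R)ᵐᵒᵖ) (t : K), m (s • t) = op (unop s) • m t := by
      intro s t
      apply hq_inj
      rw [hm, map_smul, hm, op_unop]
      rw [show ((s • t : K) : (Env R)ᵐᵒᵖ) • y = (s * (t : (Env R)ᵐᵒᵖ)) • y from rfl,
        mul_smul]
    set f : K →ₗ[(Env R)ᵐᵒᵖ] Q :=
      { toFun := fun t => q (d (m t)) - op (δ₂ (unop (t : (Env R)ᵐᵒᵖ))) • y
        map_add' := by
          intro t₁ t₂
          first | dsimp only | skip
          rw [hm_add, hd.1, map_add, Submodule.coe_add, unop_add, map_add, op_add,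
            env_add_smul]
          abel
        map_smul' := by
          intro s t
          simp only [RingHom.id_apply]
          first | dsimp only | skip
          rw [hm_smul, bimod_d_smul hδ hd, ← hδ₂def, map_add, map_smul, map_smul, op_unop,
            hm]
          rw [show ((s • t : K) : (Env R)ᵐᵒᵖ) = s * (t : (Env R)ᵐᵒᵖ) from rfl]
          rw [show unop (s * (t : (Env R)ᵐᵒᵖ)) = unop (t : (Env R)ᵐᵒᵖ) * unop s from rfl]
          rw [envDer_mul hδ, op_add, env_add_smul]
          rw [show op (unop (t : (Env R)ᵐᵒᵖ) * δ₂ (unop s)) =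
            op (δ₂ (unop s)) * (t : (Env R)ᵐᵒᵖ) from by rw [op_mul, op_unop]]
          rw [show op (δ₂ (unop (t : (Env R)ᵐᵒᵖ)) * unop s) =
            s * op (δ₂ (unop (t : (Env R)ᵐᵒᵖ))) from by rw [op_mul, op_unop]]
          rw [mul_smul, mul_smul, env_smul_sub]
          abel }
    obtain ⟨g, hg⟩ := hq.closed K hK f
    refine ⟨g 1, K, hK, fun t ht => ⟨m ⟨t, ht⟩, hm ⟨t, ht⟩⟩, ?_⟩
    intro t ht x hx
    have hx' : x = m ⟨t, ht⟩ := hq_inj _ _ (by rw [hx, hm ⟨t, ht⟩])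
    have h1 : t • g 1 = g t := by
      rw [← map_smul, smul_eq_mul, mul_one]
    rw [h1, show (t : (Env R)ᵐᵒᵖ) = ((⟨t, ht⟩ : K) : (Env R)ᵐᵒᵖ) from rfl, hg, hx']
    rfl
  choose d' K hK hKpre hKspec using key
  have hTF := hq.torsionFree
  have eqQ : ∀ (z₁ z₂ : Q) (L : Ideal (Env R)ᵐᵒᵖ), L ∈ symSets Fl Fr →
      (∀ t ∈ L, t • z₁ = t • z₂) → z₁ = z₂ := by
    intro z₁ z₂ L hL h
    have h0 : z₁ - z₂ = 0 :=
      eq_zero_of_ann Fl Fr hTF hL fun t ht => by rw [env_smul_sub, h t ht, sub_self]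
    exact sub_eq_zero.mp h0
  -- compatibility with q
  have compat : ∀ x : M, d' (q x) = q (d x) := by
    intro x
    apply eqQ _ _ (K (q x)) (hK (q x))
    intro t ht
    have h1 := hKspec (q x) t ht (op (unop t) • x)
      (by rw [op_unop]; exact map_smul q t x)
    have h2 : d (op (unop t) • x) = op (unop t) • d x + op (δ₂ (unop t)) • x :=
      bimod_d_smul hδ hd (unop t) x
    rw [h1, h2, map_add, map_smul, map_smul, op_unop]
    abel
  refine ⟨d', ⟨?_, ?_, ?_⟩, compat⟩
  · -- additivity
    intro y₁ y₂
    set L := K y₁ ⊓ K y₂ ⊓ K (y₁ + y₂) with hLdef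
    apply eqQ _ _ L
      (symSets_inf Fl Fr (symSets_inf Fl Fr (hK y₁) (hK y₂)) (hK (y₁ + y₂)))
    intro t ht
    rw [hLdef, Submodule.mem_inf, Submodule.mem_inf] at ht
    obtain ⟨⟨ht₁, ht₂⟩, ht₃⟩ := ht
    obtain ⟨x₁, hx₁⟩ := hKpre y₁ t ht₁
    obtain ⟨x₂, hx₂⟩ := hKpre y₂ t ht₂
    have h12 : q (x₁ + x₂) = t • (y₁ + y₂) := by
      rw [map_add, hx₁, hx₂, env_smul_add]
    rw [hKspec (y₁ + y₂) t ht₃ _ h12, env_smul_add t (d' y₁) (d' y₂),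
      hKspec y₁ t ht₁ _ hx₁, hKspec y₂ t ht₂ _ hx₂, hd.1, map_add, env_smul_add]
    abel
  · -- right action rule
    intro y r
    set c : (Env R)ᵐᵒᵖ := op (r ⊗ₜ[ℤ] (1 : Rᵐᵒᵖ)) with hcdef
    set K₂ : Ideal (Env R)ᵐᵒᵖ :=
      Submodule.comap (LinearMap.toSpanSingleton (Env R)ᵐᵒᵖ (Env R)ᵐᵒᵖ c) (K y) with hK₂def
    have hmemK₂ : ∀ t : (Env R)ᵐᵒᵖ, t ∈ K₂ ↔ t * c ∈ K y := by
      intro t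
      rw [hK₂def, Submodule.mem_comap, LinearMap.toSpanSingleton_apply, smul_eq_mul]
    have hK₂ : K₂ ∈ symSets Fl Fr := by
      obtain ⟨I, hI, J, hJ, hle⟩ := hK y
      refine ⟨I, hI,
        Submodule.comap (LinearMap.toSpanSingleton Rᵐᵒᵖ Rᵐᵒᵖ (op r)) J,
        Fr.quot_mem hJ (op r), ?_⟩
      rw [symGen, Ideal.span_le]
      rintro z (⟨j, hj, rfl⟩ | ⟨i, hi, rfl⟩)
      · rw [SetLike.mem_coe, hmemK₂, hcdef, ← op_mul,
          Algebra.TensorProduct.tmul_mul_tmul, mul_one]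
        have hj' : op (r * unop j) ∈ J := by
          have h2 : j * op r ∈ J := hj
          rwa [show j * op r = op (r * unop j) from rfl] at h2
        have := hle (mem_symGen_left (I := I) hj')
        rwa [show unop (op (r * unop j)) = r * unop j from rfl] at this
      · rw [SetLike.mem_coe, hmemK₂, hcdef, ← op_mul,
          Algebra.TensorProduct.tmul_mul_tmul, one_mul, mul_one]
        have : op (r ⊗ₜ[ℤ] op i) = op (r ⊗ₜ[ℤ] (1:Rᵐᵒᵖ)) * op ((1:R) ⊗ₜ[ℤ] op i) := by
          rw [← op_mul, Algebra.TensorProduct.tmul_mul_tmul, one_mul, mul_one]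
        rw [this]
        exact Ideal.mul_mem_left _ _ (hle (mem_symGen_right hi))
    apply eqQ _ _ (K (c • y) ⊓ K₂) (symSets_inf Fl Fr (hK (c • y)) hK₂)
    intro t ht
    rw [Submodule.mem_inf] at ht
    obtain ⟨ht₁, ht₂⟩ := ht
    rw [hmemK₂] at ht₂
    obtain ⟨x, hx⟩ := hKpre y (t * c) ht₂
    have hx' : q x = t • (c • y) := by rw [hx, mul_smul]
    have e1 := hKspec (c • y) t ht₁ x hx'
    have e2 := hKspec y (t * c) ht₂ x hx
    -- Leibniz for δ₂ on unop (t * c) = (r ⊗ 1) * unop t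
    have hδc : δ₂ (r ⊗ₜ[ℤ] (1 : Rᵐᵒᵖ)) = δ r ⊗ₜ[ℤ] (1 : Rᵐᵒᵖ) := by
      rw [hδ₂def, envDer_tmul]
      rw [show unop (1 : Rᵐᵒᵖ) = (1 : R) from rfl, isDer_zero hδ]
      simp
    have hsplit : op (δ₂ (unop (t * c))) =
        t * op (δ r ⊗ₜ[ℤ] (1 : Rᵐᵒᵖ)) + op (δ₂ (unop t)) * c := by
      rw [show unop (t * c) = unop c * unop t from rfl, hcdef]
      rw [show unop (op (r ⊗ₜ[ℤ] (1:Rᵐᵒᵖ))) = r ⊗ₜ[ℤ] (1:Rᵐᵒᵖ) from rfl]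
      rw [hδ₂def, envDer_mul hδ, ← hδ₂def, hδc, op_add, op_mul, op_mul, op_unop]
    rw [env_smul_add, ← mul_smul t c (d' y), ← mul_smul t _ y, e1, e2,
      ← mul_smul (op (δ₂ (unop t))) c y, hsplit, env_add_smul]
    abel
  · -- left action rule
    intro y s
    set c : (Env R)ᵐᵒᵖ := op ((1 : R) ⊗ₜ[ℤ] op s) with hcdef
    set K₂ : Ideal (Env R)ᵐᵒᵖ :=
      Submodule.comap (LinearMap.toSpanSingleton (Env R)ᵐᵒᵖ (Env R)ᵐᵒᵖ c) (K y) with hK₂def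
    have hmemK₂ : ∀ t : (Env R)ᵐᵒᵖ, t ∈ K₂ ↔ t * c ∈ K y := by
      intro t
      rw [hK₂def, Submodule.mem_comap, LinearMap.toSpanSingleton_apply, smul_eq_mul]
    have hK₂ : K₂ ∈ symSets Fl Fr := by
      obtain ⟨I, hI, J, hJ, hle⟩ := hK y
      refine ⟨Submodule.comap (LinearMap.toSpanSingleton R R s) I,
        Fl.quot_mem hI s, J, hJ, ?_⟩
      rw [symGen, Ideal.span_le]
      rintro z (⟨j, hj, rfl⟩ | ⟨i, hi, rfl⟩)
      · rw [SetLike.mem_coe, hmemK₂, hcdef, ← op_mul,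
          Algebra.TensorProduct.tmul_mul_tmul, mul_one, one_mul]
        have : unop j ⊗ₜ[ℤ] op s = ((unop j ⊗ₜ[ℤ] (1:Rᵐᵒᵖ)) * ((1:R) ⊗ₜ[ℤ] op s)) := by
          rw [Algebra.TensorProduct.tmul_mul_tmul, mul_one, one_mul]
        rw [this, op_mul]
        exact Ideal.mul_mem_left _ _ (hle (mem_symGen_left hj))
      · rw [SetLike.mem_coe, hmemK₂, hcdef, ← op_mul,
          Algebra.TensorProduct.tmul_mul_tmul, one_mul]
        have hi' : i * s ∈ I := hi
        have := hle (mem_symGen_right (J := J) hi')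
        rwa [show op s * op i = op (i * s) from rfl]
    apply eqQ _ _ (K (c • y) ⊓ K₂) (symSets_inf Fl Fr (hK (c • y)) hK₂)
    intro t ht
    rw [Submodule.mem_inf] at ht
    obtain ⟨ht₁, ht₂⟩ := ht
    rw [hmemK₂] at ht₂
    obtain ⟨x, hx⟩ := hKpre y (t * c) ht₂
    have hx' : q x = t • (c • y) := by rw [hx, mul_smul]
    have e1 := hKspec (c • y) t ht₁ x hx'
    have e2 := hKspec y (t * c) ht₂ x hx
    have hδc : δ₂ ((1 : R) ⊗ₜ[ℤ] op s) = (1 : R) ⊗ₜ[ℤ] op (δ s) := by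
      rw [hδ₂def, envDer_tmul]
      rw [show unop (op s) = s from rfl, isDer_zero hδ]
      simp
    have hsplit : op (δ₂ (unop (t * c))) =
        t * op ((1 : R) ⊗ₜ[ℤ] op (δ s)) + op (δ₂ (unop t)) * c := by
      rw [show unop (t * c) = unop c * unop t from rfl, hcdef]
      rw [show unop (op ((1:R) ⊗ₜ[ℤ] op s)) = (1:R) ⊗ₜ[ℤ] op s from rfl]
      rw [hδ₂def, envDer_mul hδ, ← hδ₂def, hδc, op_add, op_mul, op_mul, op_unop]
    rw [env_smul_add, ← mul_smul t c (d' y), ← mul_smul t _ y, e1, e2,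
      ← mul_smul (op (δ₂ (unop t))) c y, hsplit, env_add_smul]
    abel
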